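/- Let Y₁, …, Y_n be a sequence of random variables adapted to a filtration with Y_i ∈ [0, B] almost surely. Then with probability at least 1 − δ, ∑_{i=1}^n E[Y_i | F_{i−1}] ≤ 2·∑_{i=1}^n Y_i + 4B·log(4n/δ), and with probability at least 1 − δ, ∑_{i=1}^n Y_i ≤ 2·∑_{i=1}^n E[Y_i | F_{i−1}] + 8B·log(4n/δ). -/

import Mathlib

open MeasureTheory Finset

lemma exp_chord {B : ℝ} (hB : 0 < B) (l : ℝ) {x : ℝ} (hx : x ∈ Set.Icc (0:ℝ) B) :
    Real.exp (l * x) ≤ 1 + (Real.exp (l * B) - 1) / B * x := by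
  obtain ⟨hx0, hxB⟩ := hx
  have hb0 : 0 ≤ x / B := div_nonneg hx0 hB.le
  have hb1 : x / B ≤ 1 := (div_le_one hB).2 hxB
  have h := convexOn_exp.2 (Set.mem_univ (0:ℝ)) (Set.mem_univ (l * B))
    (by linarith : (0:ℝ) ≤ 1 - x / B) hb0 (by ring)
  simp only [smul_eq_mul, mul_zero, zero_add, Real.exp_zero, mul_one] at h
  have hxb : x / B * (l * B) = l * x := by field_simp
  rw [hxb] at h
  have key : 1 - x / B + x / B * Real.exp (l * B) = 1 + (Real.exp (l * B) - 1) / B * x := by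
    field_simp; ring
  linarith [h, key]

lemma exp_supermartingale {Ω : Type*} {m0 : MeasurableSpace Ω} (μ : Measure Ω)
    [IsProbabilityMeasure μ] (F : Filtration ℕ m0) (B : ℝ) (hB : 0 < B)
    (Y : ℕ → Ω → ℝ)
    (hadapt : ∀ i, StronglyMeasurable[F (i + 1)] (Y i))
    (hbdd : ∀ᵐ ω ∂μ, ∀ i, Y i ω ∈ Set.Icc (0 : ℝ) B)
    (l c : ℝ) (hchord : ∀ x ∈ Set.Icc (0:ℝ) B, Real.exp (l * x) ≤ 1 + c * x)
    (n : ℕ) :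
    ∫ ω, Real.exp (∑ i ∈ Finset.range n, (l * Y i ω - c * (μ[Y i | F i]) ω)) ∂μ ≤ 1 := by
  have hYsm : ∀ i, StronglyMeasurable (Y i) := fun i => (hadapt i).mono (F.le _)
  have hYint : ∀ i, Integrable (Y i) μ := by
    intro i
    refine Integrable.mono' (integrable_const B) (hYsm i).aestronglyMeasurable ?_
    filter_upwards [hbdd] with ω hω
    rw [Real.norm_eq_abs, abs_le]
    exact ⟨by linarith [(hω i).1], (hω i).2⟩
  have hEbdd : ∀ᵐ ω ∂μ, ∀ i, (μ[Y i | F i]) ω ∈ Set.Icc (0:ℝ) B := by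
    rw [ae_all_iff]
    intro i
    have h1 : 0 ≤ᵐ[μ] μ[Y i | F i] :=
      condExp_nonneg (by filter_upwards [hbdd] with ω hω; exact (hω i).1)
    have h2 : μ[Y i | F i] ≤ᵐ[μ] fun _ => B := by
      have h := condExp_mono (m := F i) (hYint i) (integrable_const B)
        (by filter_upwards [hbdd] with ω hω; exact (hω i).2)
      rwa [condExp_const (F.le i)] at h
    filter_upwards [h1, h2] with ω h1 h2
    exact ⟨h1, h2⟩
  have hZsm : ∀ k, StronglyMeasurable[F k]
      (fun ω => Real.exp (∑ i ∈ Finset.range k, (l * Y i ω - c * (μ[Y i | F i]) ω))) := by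
    intro k
    refine Real.continuous_exp.comp_stronglyMeasurable ?_
    refine Finset.stronglyMeasurable_fun_sum _ fun i hi => ?_
    have hik : i + 1 ≤ k := mem_range.1 hi
    exact (((hadapt i).mono (F.mono hik)).const_mul l).sub
      ((stronglyMeasurable_condExp.mono (F.mono (Nat.le_of_succ_le hik))).const_mul c)
  have hterm : ∀ᵐ ω ∂μ, ∀ i, l * Y i ω - c * (μ[Y i | F i]) ω ≤ (|l| + |c|) * B := by
    filter_upwards [hbdd, hEbdd] with ω h1 h2
    intro i
    obtain ⟨hY0, hYB⟩ := h1 i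
    obtain ⟨hE0, hEB⟩ := h2 i
    nlinarith [mul_nonneg (sub_nonneg.2 (le_abs_self l)) hY0,
      mul_nonneg (abs_nonneg l) (sub_nonneg.2 hYB),
      mul_nonneg (sub_nonneg.2 (neg_abs_le c)) hE0,
      mul_nonneg (abs_nonneg c) (sub_nonneg.2 hEB)]
  have hZbdd : ∀ k, ∀ᵐ ω ∂μ,
      ‖Real.exp (∑ i ∈ Finset.range k, (l * Y i ω - c * (μ[Y i | F i]) ω))‖ ≤
        Real.exp (k * ((|l| + |c|) * B)) := by
    intro k
    filter_upwards [hterm] with ω hω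
    rw [Real.norm_eq_abs, abs_of_pos (Real.exp_pos _), Real.exp_le_exp]
    calc ∑ i ∈ Finset.range k, (l * Y i ω - c * (μ[Y i | F i]) ω)
        ≤ ∑ _i ∈ Finset.range k, (|l| + |c|) * B := Finset.sum_le_sum fun i _ => hω i
      _ = k * ((|l| + |c|) * B) := by simp [Finset.sum_const, nsmul_eq_mul]
  have hZint : ∀ k, Integrable
      (fun ω => Real.exp (∑ i ∈ Finset.range k, (l * Y i ω - c * (μ[Y i | F i]) ω))) μ :=
    fun k => Integrable.mono' (integrable_const _)
      ((hZsm k).mono (F.le k)).aestronglyMeasurable (hZbdd k)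
  induction n with
  | zero => simp
  | succ k ih =>
    have hEksm : StronglyMeasurable[F k] (fun ω => (μ[Y k | F k]) ω) := stronglyMeasurable_condExp
    -- h = Z k * exp(-(c * E k))
    have hhsm : StronglyMeasurable[F k] (fun ω =>
        Real.exp (∑ i ∈ Finset.range k, (l * Y i ω - c * (μ[Y i | F i]) ω)) *
          Real.exp (-(c * (μ[Y k | F k]) ω))) :=
      (hZsm k).mul (Real.continuous_exp.comp_stronglyMeasurable (hEksm.const_mul c).neg)
    have hhbd : ∀ᵐ ω ∂μ,
        ‖Real.exp (∑ i ∈ Finset.range k, (l * Y i ω - c * (μ[Y i | F i]) ω)) *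
          Real.exp (-(c * (μ[Y k | F k]) ω))‖ ≤
          Real.exp (k * ((|l| + |c|) * B)) * Real.exp (|c| * B) := by
      filter_upwards [hZbdd k, hEbdd] with ω h1 h2
      rw [norm_mul]
      refine mul_le_mul h1 ?_ (norm_nonneg _) (Real.exp_pos _).le
      rw [Real.norm_eq_abs, abs_of_pos (Real.exp_pos _), Real.exp_le_exp]
      obtain ⟨hE0, hEB⟩ := h2 k
      nlinarith [mul_nonneg (sub_nonneg.2 (neg_abs_le c)) hE0,
        mul_nonneg (abs_nonneg c) (sub_nonneg.2 hEB)]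
    have hXsm : StronglyMeasurable (fun ω => Real.exp (l * Y k ω)) :=
      Real.continuous_exp.comp_stronglyMeasurable ((hYsm k).const_mul l)
    have hXint : Integrable (fun ω => Real.exp (l * Y k ω)) μ := by
      refine Integrable.mono' (integrable_const (Real.exp (|l| * B)))
        hXsm.aestronglyMeasurable ?_
      filter_upwards [hbdd] with ω hω
      rw [Real.norm_eq_abs, abs_of_pos (Real.exp_pos _), Real.exp_le_exp]
      obtain ⟨hY0, hYB⟩ := hω k
      nlinarith [mul_nonneg (sub_nonneg.2 (le_abs_self l)) hY0,
        mul_nonneg (abs_nonneg l) (sub_nonneg.2 hYB)]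
    set h : Ω → ℝ := fun ω =>
      Real.exp (∑ i ∈ Finset.range k, (l * Y i ω - c * (μ[Y i | F i]) ω)) *
        Real.exp (-(c * (μ[Y k | F k]) ω)) with hh_def
    set X : Ω → ℝ := fun ω => Real.exp (l * Y k ω) with hX_def
    have hh0 : ∀ ω, 0 ≤ h ω := fun ω => mul_nonneg (Real.exp_pos _).le (Real.exp_pos _).le
    have hhZ : ∀ ω, h ω * Real.exp (c * (μ[Y k | F k]) ω) =
        Real.exp (∑ i ∈ Finset.range k, (l * Y i ω - c * (μ[Y i | F i]) ω)) := by
      intro ω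
      rw [hh_def, mul_assoc, ← Real.exp_add, neg_add_cancel, Real.exp_zero, mul_one]
    have heq1 : ∀ ω,
        Real.exp (∑ i ∈ Finset.range (k+1), (l * Y i ω - c * (μ[Y i | F i]) ω)) =
          (h * X) ω := by
      intro ω
      rw [Finset.sum_range_succ, Real.exp_add, sub_eq_add_neg, Real.exp_add]
      simp only [hh_def, hX_def, Pi.mul_apply]
      ring
    have hhXint : Integrable (h * X) μ :=
      Integrable.bdd_mul hXint ((hhsm.mono (F.le k)).aestronglyMeasurable) hhbd
    have hpull : μ[h * X | F k] =ᵐ[μ] h * μ[X | F k] :=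
      condExp_stronglyMeasurable_mul_of_bound (F.le k) hhsm hXint _ hhbd
    -- condexp bound
    have hcond : μ[X | F k] ≤ᵐ[μ] fun ω => Real.exp (c * (μ[Y k | F k]) ω) := by
      have h1 : μ[X | F k] ≤ᵐ[μ] μ[fun ω => 1 + c * Y k ω | F k] := by
        refine condExp_mono hXint ((integrable_const 1).add ((hYint k).const_mul c)) ?_
        filter_upwards [hbdd] with ω hω
        exact hchord _ (hω k)
      have h2 : μ[fun ω => 1 + c * Y k ω | F k] =ᵐ[μ]
          fun ω => 1 + c * (μ[Y k | F k]) ω := by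
        have ha : μ[(fun _ => (1:ℝ)) + fun ω => c * Y k ω | F k] =ᵐ[μ]
            μ[fun _ => (1:ℝ) | F k] + μ[fun ω => c * Y k ω | F k] :=
          condExp_add (integrable_const 1) ((hYint k).const_mul c) _
        have hb : μ[fun ω => c * Y k ω | F k] =ᵐ[μ] fun ω => c * (μ[Y k | F k]) ω := by
          have := condExp_smul (μ := μ) (m := F k) c (Y k)
          simpa [Pi.smul_def, smul_eq_mul] using this
        have hc1 : μ[fun _ => (1:ℝ) | F k] = fun _ => (1:ℝ) := condExp_const (F.le k) 1
        filter_upwards [ha, hb] with ω ha hb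
        simp only [Pi.add_apply] at ha ⊢
        rw [show (fun ω => 1 + c * Y k ω) = ((fun _ => (1:ℝ)) + fun ω => c * Y k ω) from rfl,
          ha, hc1, hb]
      filter_upwards [h1, h2] with ω h1 h2
      calc (μ[X | F k]) ω ≤ (μ[fun ω => 1 + c * Y k ω | F k]) ω := h1
        _ = 1 + c * (μ[Y k | F k]) ω := h2
        _ ≤ Real.exp (c * (μ[Y k | F k]) ω) := by
            linarith [Real.add_one_le_exp (c * (μ[Y k | F k]) ω)]
    have hint1 : Integrable (h * μ[X | F k]) μ :=
      Integrable.bdd_mul integrable_condExp ((hhsm.mono (F.le k)).aestronglyMeasurable) hhbd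
    have hint2 : Integrable (fun ω => h ω * Real.exp (c * (μ[Y k | F k]) ω)) μ :=
      (hZint k).congr (Filter.Eventually.of_forall fun ω => (hhZ ω).symm)
    calc ∫ ω, Real.exp (∑ i ∈ Finset.range (k+1), (l * Y i ω - c * (μ[Y i | F i]) ω)) ∂μ
        = ∫ ω, (h * X) ω ∂μ := by
          exact integral_congr_ae (Filter.Eventually.of_forall heq1)
      _ = ∫ ω, (μ[h * X | F k]) ω ∂μ := (integral_condExp (F.le k)).symm
      _ = ∫ ω, (h * μ[X | F k]) ω ∂μ := integral_congr_ae hpull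
      _ ≤ ∫ ω, h ω * Real.exp (c * (μ[Y k | F k]) ω) ∂μ := by
          refine integral_mono_ae hint1 hint2 ?_
          filter_upwards [hcond] with ω hω
          exact mul_le_mul_of_nonneg_left hω (hh0 ω)
      _ = ∫ ω, Real.exp (∑ i ∈ Finset.range k, (l * Y i ω - c * (μ[Y i | F i]) ω)) ∂μ :=
          integral_congr_ae (Filter.Eventually.of_forall hhZ)
      _ ≤ 1 := ih

lemma condexp_mem_Icc {Ω : Type*} {m0 : MeasurableSpace Ω} (μ : Measure Ω)
    [IsProbabilityMeasure μ] (F : Filtration ℕ m0) (B : ℝ) (hB : 0 < B)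
    (Y : ℕ → Ω → ℝ)
    (hadapt : ∀ i, StronglyMeasurable[F (i + 1)] (Y i))
    (hbdd : ∀ᵐ ω ∂μ, ∀ i, Y i ω ∈ Set.Icc (0 : ℝ) B) :
    ∀ᵐ ω ∂μ, ∀ i, (μ[Y i | F i]) ω ∈ Set.Icc (0:ℝ) B := by
  have hYint : ∀ i, Integrable (Y i) μ := by
    intro i
    refine Integrable.mono' (integrable_const B)
      ((hadapt i).mono (F.le _)).aestronglyMeasurable ?_
    filter_upwards [hbdd] with ω hω
    rw [Real.norm_eq_abs, abs_le]
    exact ⟨by linarith [(hω i).1], (hω i).2⟩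
  rw [ae_all_iff]
  intro i
  have h1 : 0 ≤ᵐ[μ] μ[Y i | F i] :=
    condExp_nonneg (by filter_upwards [hbdd] with ω hω; exact (hω i).1)
  have h2 : μ[Y i | F i] ≤ᵐ[μ] fun _ => B := by
    have h := condExp_mono (m := F i) (hYint i) (integrable_const B)
      (by filter_upwards [hbdd] with ω hω; exact (hω i).2)
    rwa [condExp_const (F.le i)] at h
  filter_upwards [h1, h2] with ω h1 h2
  exact ⟨h1, h2⟩

lemma markov_bad {Ω : Type*} {m0 : MeasurableSpace Ω} (μ : Measure Ω)
    [IsProbabilityMeasure μ] (F : Filtration ℕ m0) (B : ℝ) (hB : 0 < B)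
    (Y : ℕ → Ω → ℝ)
    (hadapt : ∀ i, StronglyMeasurable[F (i + 1)] (Y i))
    (hbdd : ∀ᵐ ω ∂μ, ∀ i, Y i ω ∈ Set.Icc (0 : ℝ) B)
    (l c : ℝ) (hchord : ∀ x ∈ Set.Icc (0:ℝ) B, Real.exp (l * x) ≤ 1 + c * x)
    (n : ℕ) (δ : ℝ) (hδ0 : 0 < δ) (hδ1 : δ < 1) (bad : Set Ω)
    (hsub : ∀ᵐ ω ∂μ, ω ∈ bad →
      Real.log δ⁻¹ ≤ ∑ i ∈ Finset.range n, (l * Y i ω - c * (μ[Y i | F i]) ω)) :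
    μ bad ≤ ENNReal.ofReal δ := by
  have hEbdd := condexp_mem_Icc μ F B hB Y hadapt hbdd
  have hZsm : StronglyMeasurable
      (fun ω => Real.exp (∑ i ∈ Finset.range n, (l * Y i ω - c * (μ[Y i | F i]) ω))) := by
    refine Real.continuous_exp.comp_stronglyMeasurable ?_
    refine Finset.stronglyMeasurable_fun_sum _ fun i hi => ?_
    exact (((hadapt i).mono (F.le _)).const_mul l).sub
      ((stronglyMeasurable_condExp.mono (F.le i)).const_mul c)
  have hZint : Integrable
      (fun ω => Real.exp (∑ i ∈ Finset.range n, (l * Y i ω - c * (μ[Y i | F i]) ω))) μ := by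
    refine Integrable.mono' (integrable_const (Real.exp (n * ((|l| + |c|) * B))))
      hZsm.aestronglyMeasurable ?_
    filter_upwards [hbdd, hEbdd] with ω h1 h2
    rw [Real.norm_eq_abs, abs_of_pos (Real.exp_pos _), Real.exp_le_exp]
    calc ∑ i ∈ Finset.range n, (l * Y i ω - c * (μ[Y i | F i]) ω)
        ≤ ∑ _i ∈ Finset.range n, (|l| + |c|) * B := by
          refine Finset.sum_le_sum fun i _ => ?_
          obtain ⟨hY0, hYB⟩ := h1 i
          obtain ⟨hE0, hEB⟩ := h2 i
          nlinarith [mul_nonneg (sub_nonneg.2 (le_abs_self l)) hY0,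
            mul_nonneg (abs_nonneg l) (sub_nonneg.2 hYB),
            mul_nonneg (sub_nonneg.2 (neg_abs_le c)) hE0,
            mul_nonneg (abs_nonneg c) (sub_nonneg.2 hEB)]
      _ = n * ((|l| + |c|) * B) := by simp [Finset.sum_const, nsmul_eq_mul]
  have key := exp_supermartingale μ F B hB Y hadapt hbdd l c hchord n
  have hm := mul_meas_ge_le_integral_of_nonneg
    (f := fun ω => Real.exp (∑ i ∈ Finset.range n, (l * Y i ω - c * (μ[Y i | F i]) ω)))
    (Filter.Eventually.of_forall fun ω => (Real.exp_pos _).le) hZint δ⁻¹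
  set s : Set Ω := {ω | δ⁻¹ ≤ Real.exp (∑ i ∈ Finset.range n, (l * Y i ω - c * (μ[Y i | F i]) ω))}
    with hs_def
  have hmono : μ bad ≤ μ s := by
    refine measure_mono_ae ?_
    filter_upwards [hsub] with ω h hω
    have h2 := h hω
    show δ⁻¹ ≤ Real.exp _
    calc δ⁻¹ = Real.exp (Real.log δ⁻¹) := (Real.exp_log (by positivity)).symm
      _ ≤ _ := Real.exp_le_exp.2 h2
  have hfin : μ s ≠ ⊤ := measure_ne_top μ _
  have h2 : δ⁻¹ * (μ s).toReal ≤ 1 := le_trans hm key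
  have h1 : (μ s).toReal ≤ δ := by
    have h3 : (μ s).toReal = δ * (δ⁻¹ * (μ s).toReal) := by
      field_simp
    rw [h3]
    calc δ * (δ⁻¹ * (μ s).toReal) ≤ δ * 1 := by
          exact mul_le_mul_of_nonneg_left h2 hδ0.le
      _ = δ := mul_one δ
  refine hmono.trans ?_
  rw [← ENNReal.ofReal_toReal hfin]
  exact ENNReal.ofReal_le_ofReal h1



theorem stmt_17 {Ω : Type*} {m0 : MeasurableSpace Ω} (μ : Measure Ω) [IsProbabilityMeasure μ]
    (F : Filtration ℕ m0) (n : ℕ) (hn : 1 ≤ n) (B : ℝ) (hB : 0 < B)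
    (Y : ℕ → Ω → ℝ) (δ : ℝ) (hδ0 : 0 < δ) (hδ1 : δ < 1)
    (hadapt : ∀ i, StronglyMeasurable[F (i + 1)] (Y i))
    (hbdd : ∀ᵐ ω ∂μ, ∀ i, Y i ω ∈ Set.Icc (0 : ℝ) B) :
    μ {ω | ¬ (∑ i ∈ Finset.range n, (μ[Y i | F i]) ω ≤
        2 * ∑ i ∈ Finset.range n, Y i ω + 4 * B * Real.log (4 * n / δ))} ≤
      ENNReal.ofReal δ ∧
    μ {ω | ¬ (∑ i ∈ Finset.range n, Y i ω ≤
        2 * ∑ i ∈ Finset.range n, (μ[Y i | F i]) ω + 8 * B * Real.log (4 * n / δ))} ≤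
      ENNReal.ofReal δ := by
  have hEbdd := condexp_mem_Icc μ F B hB Y hadapt hbdd
  have hn1 : (1:ℝ) ≤ (n:ℝ) := by exact_mod_cast hn
  set L := Real.log (4 * n / δ) with hL_def
  have hlog4n : 0 ≤ Real.log (4 * n) := Real.log_nonneg (by nlinarith)
  have hLsplit : L = Real.log (4 * n) - Real.log δ := Real.log_div (by positivity) hδ0.ne'
  have hlogδ : Real.log δ < 0 := Real.log_neg hδ0 hδ1
  have hL0 : 0 ≤ Real.log δ⁻¹ := by rw [Real.log_inv]; linarith
  have hL1 : Real.log δ⁻¹ ≤ L := by rw [Real.log_inv, hLsplit]; linarith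
  constructor
  · have hlB : (-B⁻¹) * B = -1 := by field_simp
    refine markov_bad μ F B hB Y hadapt hbdd (-B⁻¹) ((Real.exp ((-B⁻¹) * B) - 1) / B)
      (fun x hx => exp_chord hB _ hx) n δ hδ0 hδ1 _ ?_
    filter_upwards [hbdd, hEbdd] with ω h1 h2 hbad
    simp only [Set.mem_setOf_eq, not_le] at hbad
    set S := ∑ i ∈ Finset.range n, Y i ω with hS_def
    set T := ∑ i ∈ Finset.range n, (μ[Y i | F i]) ω with hT_def
    have hS : 0 ≤ S := Finset.sum_nonneg fun i _ => (h1 i).1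
    have hT : 0 ≤ T := Finset.sum_nonneg fun i _ => (h2 i).1
    have hsum : ∑ i ∈ Finset.range n,
        ((-B⁻¹) * Y i ω - (Real.exp ((-B⁻¹) * B) - 1) / B * (μ[Y i | F i]) ω)
        = (-B⁻¹) * S - (Real.exp ((-B⁻¹) * B) - 1) / B * T := by
      rw [Finset.sum_sub_distrib, ← Finset.mul_sum, ← Finset.mul_sum]
    rw [hsum, hlB]
    set a := Real.exp (-1 : ℝ) with ha_def
    have ha0 : 0 < a := Real.exp_pos _
    have ha1 : a < 1/2 := by
      rw [ha_def, Real.exp_neg]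
      have he : (2:ℝ) < Real.exp 1 := by linarith [Real.exp_one_gt_d9]
      have hepos : (0:ℝ) < Real.exp 1 := Real.exp_pos 1
      have hinv : Real.exp 1 * (Real.exp 1)⁻¹ = 1 := mul_inv_cancel₀ hepos.ne'
      nlinarith [inv_pos.2 hepos]
    have key : B * Real.log δ⁻¹ ≤ -S + (1 - a) * T := by
      nlinarith [mul_nonneg (by linarith : (0:ℝ) ≤ 1 - a)
          (by linarith : (0:ℝ) ≤ T - (2*S + 4*B*L)),
        mul_nonneg (by linarith : (0:ℝ) ≤ 1 - 2*a) hS,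
        mul_nonneg (mul_nonneg (by linarith : (0:ℝ) ≤ 2 - 4*a) hB.le) (le_trans hL0 hL1),
        mul_nonneg hB.le (by linarith : (0:ℝ) ≤ L - Real.log δ⁻¹),
        mul_nonneg hB.le hL0]
    have hrw : -B⁻¹ * S - (a - 1) / B * T = (-S + (1 - a) * T) / B := by
      field_simp; ring
    rw [hrw, le_div_iff₀ hB, mul_comm]
    exact key
  · have hlB : B⁻¹ * B = 1 := by field_simp
    refine markov_bad μ F B hB Y hadapt hbdd B⁻¹ ((Real.exp (B⁻¹ * B) - 1) / B)
      (fun x hx => exp_chord hB _ hx) n δ hδ0 hδ1 _ ?_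
    filter_upwards [hbdd, hEbdd] with ω h1 h2 hbad
    simp only [Set.mem_setOf_eq, not_le] at hbad
    set S := ∑ i ∈ Finset.range n, Y i ω with hS_def
    set T := ∑ i ∈ Finset.range n, (μ[Y i | F i]) ω with hT_def
    have hS : 0 ≤ S := Finset.sum_nonneg fun i _ => (h1 i).1
    have hT : 0 ≤ T := Finset.sum_nonneg fun i _ => (h2 i).1
    have hsum : ∑ i ∈ Finset.range n,
        (B⁻¹ * Y i ω - (Real.exp (B⁻¹ * B) - 1) / B * (μ[Y i | F i]) ω)
        = B⁻¹ * S - (Real.exp (B⁻¹ * B) - 1) / B * T := by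
      rw [Finset.sum_sub_distrib, ← Finset.mul_sum, ← Finset.mul_sum]
    rw [hsum, hlB]
    set a := Real.exp (1 : ℝ) with ha_def
    have ha2 : 2 < a := by rw [ha_def]; linarith [Real.exp_one_gt_d9]
    have ha3 : a < 3 := by rw [ha_def]; linarith [Real.exp_one_lt_d9]
    have key : B * Real.log δ⁻¹ ≤ S - (a - 1) * T := by
      nlinarith [mul_nonneg (by linarith : (0:ℝ) ≤ 3 - a) hT,
        mul_nonneg hB.le (by linarith : (0:ℝ) ≤ L - Real.log δ⁻¹),
        mul_nonneg hB.le hL0]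
    have hrw : B⁻¹ * S - (a - 1) / B * T = (S - (a - 1) * T) / B := by
      field_simp
    rw [hrw, le_div_iff₀ hB, mul_comm]
    exact key
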